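/- The symmetrized ARAP energy is not a perfect barrier against collapse: with f_ARAP(σ) = ∑ᵢ₌₁³ (σᵢ − 1)², define for s > 0 the symmetrized value along the path (1, s, s), namely g(s) = (1/2)·f_ARAP(1,s,s) + (1/2)·s²·f_ARAP(1, 1/s, 1/s). Then g(s) = 2·(1 − s)² for every s > 0, and hence g(s) tends to the finite limit 2 as s → 0⁺, even though the volume (1·s·s = s²) collapses to 0. -/
import Mathlib


/-- The ARAP distortion in singular values (3D). -/
def fARAP3 (a b c : ℝ) : ℝ := (a - 1)^2 + (b - 1)^2 + (c - 1)^2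

/-- The symmetrized ARAP value along the collapsing path `(1, s, s)`. -/
noncomputable def gPath (s : ℝ) : ℝ :=
  (1/2) * fARAP3 1 s s + (1/2) * s^2 * fARAP3 1 (1/s) (1/s)

/-- The symmetrized ARAP energy is not a perfect barrier:
along the path `(1, s, s)` one has `g(s) = 2(1 − s)²` for all `s > 0`, so `g`
tends to the finite limit `2` as `s → 0⁺`, although the volume collapses. -/
theorem statement_16 :
    (∀ s : ℝ, 0 < s → gPath s = 2 * (1 - s)^2) ∧
    Filter.Tendsto gPath (nhdsWithin 0 (Set.Ioi 0)) (nhds 2) := by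
  have key : ∀ s : ℝ, 0 < s → gPath s = 2 * (1 - s)^2 := by
    intro s hs
    have hs' : s ≠ 0 := ne_of_gt hs
    simp only [gPath, fARAP3]
    field_simp
    ring
  refine ⟨key, ?_⟩
  have h : Filter.Tendsto (fun s : ℝ => 2 * (1 - s)^2) (nhdsWithin 0 (Set.Ioi 0)) (nhds 2) := by
    have hc : Continuous (fun s : ℝ => 2 * (1 - s)^2) := by continuity
    have := (hc.tendsto 0).mono_left (nhdsWithin_le_nhds (s := Set.Ioi (0:ℝ)))
    simpa using this
  exact h.congr' (by
    filter_upwards [self_mem_nhdsWithin] with s hs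
    exact (key s hs).symm)
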